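/- Define f : [0, π/2) → ℝ by f(0) = 1 and f(x) = x · cos x / sin x for x > 0 (with f(π/2) = 0). For all X ∈ [0, π/2) and Y, Z ∈ (0, π/2) with X + Y + Z ≤ π/2, one has f(Y) · f(Z) > f(X) · f(X + Y + Z). -/

import Mathlib

open Real

/-- The function `f(x) = x · cot x`, extended by `f(0) = 1`. -/
noncomputable def xCot (x : ℝ) : ℝ :=
  if x = 0 then 1 else x * Real.cos x / Real.sin x

open Set


/-- `t² < sin t · tan t` on `(0, π/2)`. -/
lemma aux_sq_lt_sin_mul_tan {t : ℝ} (h1 : 0 < t) (h2 : t < π / 2) :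
    t ^ 2 < Real.sin t * Real.tan t := by
  have hmono : StrictMonoOn (fun t => Real.sin t * Real.tan t - t ^ 2) (Ico 0 (π / 2)) := by
    apply strictMonoOn_of_deriv_pos (convex_Ico _ _)
    · apply ContinuousOn.sub
      · apply Real.continuousOn_sin.mul
        intro x hx
        have hc : Real.cos x ≠ 0 := by
          refine (Real.cos_pos_of_mem_Ioo ⟨?_, hx.2⟩).ne'
          have := pi_pos; linarith [hx.1]
        exact (Real.continuousAt_tan.2 hc).continuousWithinAt
      · fun_prop
    · intro x hx
      rw [interior_Ico] at hx
      have hx1 := hx.1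
      have hx2 := hx.2
      have hc : 0 < Real.cos x := Real.cos_pos_of_mem_Ioo ⟨by linarith, hx2⟩
      have hs : 0 < Real.sin x := Real.sin_pos_of_pos_of_lt_pi hx1 (by linarith [pi_pos])
      have hd : HasDerivAt (fun t => Real.sin t * Real.tan t - t ^ 2)
          (Real.cos x * Real.tan x + Real.sin x * (1 / Real.cos x ^ 2) - 2 * x ^ 1) x := by
        exact ((Real.hasDerivAt_sin x).mul (Real.hasDerivAt_tan hc.ne')).sub
          (by simpa using hasDerivAt_pow 2 x)
      rw [hd.deriv]
      have htan : x < Real.tan x := Real.lt_tan hx1 hx2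
      rw [Real.tan_eq_sin_div_cos] at htan ⊢
      have hkey : 0 ≤ Real.sin x * (1 / Real.cos x - 1) ^ 2 := by positivity
      have hc1 : Real.cos x * (Real.sin x / Real.cos x) = Real.sin x := by field_simp
      have hc2 : Real.sin x * (1 / Real.cos x - 1) ^ 2
          = Real.sin x * (1 / Real.cos x ^ 2) - 2 * (Real.sin x / Real.cos x) + Real.sin x := by
        field_simp; ring
      simp only [pow_one]
      nlinarith [htan, hkey]
  have h0 : (0 : ℝ) ∈ Ico 0 (π / 2) := ⟨le_rfl, by linarith [pi_pos]⟩
  have := hmono h0 ⟨h1.le, h2⟩ h1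
  simpa using this


lemma aux_sq_mul_cos_lt {t : ℝ} (h1 : 0 < t) (h2 : t < π / 2) :
    t ^ 2 * Real.cos t < Real.sin t ^ 2 := by
  have hc : 0 < Real.cos t := Real.cos_pos_of_mem_Ioo ⟨by linarith, h2⟩
  have h := aux_sq_lt_sin_mul_tan h1 h2
  rw [Real.tan_eq_sin_div_cos] at h
  have : Real.sin t * (Real.sin t / Real.cos t) * Real.cos t = Real.sin t ^ 2 := by
    field_simp
  nlinarith [h, hc]

noncomputable def phiAux (x : ℝ) : ℝ := x⁻¹ - (Real.sin x * Real.cos x)⁻¹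

lemma phiAux_hasDeriv {x : ℝ} (h1 : 0 < x) (h2 : x < π / 2) :
    HasDerivAt phiAux
      (-(x ^ 2)⁻¹ - -(Real.cos x * Real.cos x + Real.sin x * -Real.sin x) / (Real.sin x * Real.cos x) ^ 2) x := by
  have hc : 0 < Real.cos x := Real.cos_pos_of_mem_Ioo ⟨by linarith, h2⟩
  have hs : 0 < Real.sin x := Real.sin_pos_of_pos_of_lt_pi h1 (by linarith [pi_pos])
  exact (hasDerivAt_inv h1.ne').sub
    (((Real.hasDerivAt_sin x).mul (Real.hasDerivAt_cos x)).inv (mul_pos hs hc).ne')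

lemma phiAux_anti : StrictAntiOn phiAux (Ioo 0 (π / 2)) := by
  apply strictAntiOn_of_deriv_neg (convex_Ioo _ _)
  · intro x hx
    exact (phiAux_hasDeriv hx.1 hx.2).continuousAt.continuousWithinAt
  · intro x hx
    rw [interior_Ioo] at hx
    obtain ⟨h1, h2⟩ := hx
    have hc : 0 < Real.cos x := Real.cos_pos_of_mem_Ioo ⟨by linarith, h2⟩
    have hs : 0 < Real.sin x := Real.sin_pos_of_pos_of_lt_pi h1 (by linarith [pi_pos])
    rw [(phiAux_hasDeriv h1 h2).deriv]
    have key : x ^ 2 * Real.cos x < Real.sin x ^ 2 := aux_sq_mul_cos_lt h1 h2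
    have hcos1 : 1 - Real.cos x < x ^ 2 := by
      have hhalf : Real.sin (x / 2) ≤ x / 2 := Real.sin_le (by linarith)
      have hhalfpos : 0 < Real.sin (x / 2) :=
        Real.sin_pos_of_pos_of_lt_pi (by linarith) (by linarith [pi_pos])
      have hsq : Real.sin (x / 2) ^ 2 = 1 / 2 - Real.cos x / 2 := by
        have hA := Real.sin_sq (x / 2)
        have hB := Real.cos_sq (x / 2)
        rw [show 2 * (x / 2) = x by ring] at hB
        linarith
      nlinarith [hhalf, hhalfpos, hsq, sq_nonneg (x / 2)]
    have hc1 : Real.cos x ≤ 1 := Real.cos_le_one x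
    have e1 : x ^ 2 * Real.cos x * Real.cos x < Real.sin x ^ 2 * Real.cos x := by nlinarith
    have e2 : Real.cos x - x ^ 2 < Real.cos x ^ 2 := by nlinarith [sq_nonneg (1 - Real.cos x)]
    have e3 : Real.sin x ^ 2 * (Real.cos x - x ^ 2) < Real.sin x ^ 2 * Real.cos x ^ 2 := by
      have : (0:ℝ) < Real.sin x ^ 2 := by positivity
      nlinarith [e2, this]
    have hnum : x ^ 2 * (Real.cos x ^ 2 - Real.sin x ^ 2) < (Real.sin x * Real.cos x) ^ 2 := by
      nlinarith [e1, e3]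
    have hx2 : (0 : ℝ) < x ^ 2 := by positivity
    have hsc2 : (0 : ℝ) < (Real.sin x * Real.cos x) ^ 2 := by positivity
    have goal_eq : -(x ^ 2)⁻¹ - -(Real.cos x * Real.cos x + Real.sin x * -Real.sin x) / (Real.sin x * Real.cos x) ^ 2
        = (Real.cos x ^ 2 - Real.sin x ^ 2) / (Real.sin x * Real.cos x) ^ 2 - (x ^ 2)⁻¹ := by
      ring
    rw [goal_eq, sub_neg, inv_eq_one_div, div_lt_div_iff₀ hsc2 hx2]
    nlinarith [hnum]



lemma xcot_pos {x : ℝ} (h1 : 0 ≤ x) (h2 : x < π / 2) : 0 < xCot x := by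
  rcases eq_or_lt_of_le h1 with h | h
  · simp [xCot, ← h]
  · rw [xCot, if_neg h.ne']
    have hc : 0 < Real.cos x := Real.cos_pos_of_mem_Ioo ⟨by linarith, h2⟩
    have hs : 0 < Real.sin x := Real.sin_pos_of_pos_of_lt_pi h (by linarith [pi_pos])
    positivity

lemma xcot_nonneg {x : ℝ} (h1 : 0 ≤ x) (h2 : x ≤ π / 2) : 0 ≤ xCot x := by
  rcases eq_or_lt_of_le h1 with h | h
  · simp [xCot, ← h]
  · rw [xCot, if_neg h.ne']
    have hc : 0 ≤ Real.cos x := Real.cos_nonneg_of_mem_Icc ⟨by linarith, h2⟩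
    have hs : 0 < Real.sin x := Real.sin_pos_of_pos_of_lt_pi h (by linarith [pi_pos])
    positivity

lemma xcot_bounds {y : ℝ} (h1 : 0 ≤ y) (h2 : y ≤ π / 2) :
    Real.cos y ≤ xCot y ∧ xCot y ≤ 1 := by
  rcases eq_or_lt_of_le h1 with h | h
  · simp [xCot, ← h]
  · rw [xCot, if_neg h.ne']
    have hs : 0 < Real.sin y := Real.sin_pos_of_pos_of_lt_pi h (by linarith [pi_pos])
    have hc : 0 ≤ Real.cos y := Real.cos_nonneg_of_mem_Icc ⟨by linarith, h2⟩
    have hsy : Real.sin y < y := Real.sin_lt h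
    constructor
    · rw [le_div_iff₀ hs]
      nlinarith
    · rw [div_le_one hs]
      rcases lt_or_ge y (π / 2) with hy | hy
      · have hcpos : 0 < Real.cos y := Real.cos_pos_of_mem_Ioo ⟨by linarith, hy⟩
        have ht : y < Real.tan y := Real.lt_tan h hy
        rw [Real.tan_eq_sin_div_cos, lt_div_iff₀ hcpos] at ht
        linarith
      · have : y = π / 2 := le_antisymm h2 hy
        rw [this, Real.cos_pi_div_two, Real.sin_pi_div_two]
        nlinarith [pi_pos]

lemma xcot_continuousOn : ContinuousOn xCot (Icc 0 (π / 2)) := by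
  intro x hx
  rcases eq_or_lt_of_le hx.1 with h | h
  · -- continuity at 0 via squeeze
    rw [ContinuousWithinAt, ← h]
    have h0 : xCot 0 = 1 := by simp [xCot]
    rw [h0]
    have hlower : Filter.Tendsto (fun y => Real.cos y) (nhdsWithin 0 (Icc 0 (π / 2))) (nhds 1) := by
      have h := Real.continuous_cos.continuousWithinAt (s := Icc 0 (π / 2)) (x := (0:ℝ))
      rw [ContinuousWithinAt, Real.cos_zero] at h
      exact h
    apply tendsto_of_tendsto_of_tendsto_of_le_of_le' hlower tendsto_const_nhds
    · filter_upwards [self_mem_nhdsWithin] with y hy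
      exact (xcot_bounds hy.1 hy.2).1
    · filter_upwards [self_mem_nhdsWithin] with y hy
      exact (xcot_bounds hy.1 hy.2).2
  · apply ContinuousAt.continuousWithinAt
    have hs : Real.sin x ≠ 0 :=
      (Real.sin_pos_of_pos_of_lt_pi h (by linarith [pi_pos, hx.2])).ne'
    have hcont : ContinuousAt (fun y => y * Real.cos y / Real.sin y) x :=
      (continuousAt_id.mul Real.continuous_cos.continuousAt).div
        Real.continuous_sin.continuousAt hs
    apply hcont.congr
    filter_upwards [eventually_ne_nhds h.ne'] with y hy
    simp [xCot, if_neg hy]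

lemma xcot_hasDeriv {x : ℝ} (h1 : 0 < x) (h2 : x < π) :
    HasDerivAt xCot ((Real.sin x * Real.cos x - x) / Real.sin x ^ 2) x := by
  have hs : 0 < Real.sin x := Real.sin_pos_of_pos_of_lt_pi h1 h2
  have hd : HasDerivAt (fun y => y * Real.cos y / Real.sin y)
      (((1 * Real.cos x + x * -Real.sin x) * Real.sin x - x * Real.cos x * Real.cos x) / Real.sin x ^ 2) x :=
    (((hasDerivAt_id x).mul (Real.hasDerivAt_cos x)).div (Real.hasDerivAt_sin x) hs.ne')
  have heq : ((1 * Real.cos x + x * -Real.sin x) * Real.sin x - x * Real.cos x * Real.cos x)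
      = Real.sin x * Real.cos x - x := by
    linear_combination (-x) * Real.sin_sq_add_cos_sq x
  rw [heq] at hd
  apply hd.congr_of_eventuallyEq
  filter_upwards [eventually_ne_nhds h1.ne'] with y hy
  simp [xCot, if_neg hy]




lemma xcot_antitoneOn : AntitoneOn xCot (Icc 0 (π / 2)) := by
  have : StrictAntiOn xCot (Icc 0 (π / 2)) := by
    apply strictAntiOn_of_deriv_neg (convex_Icc _ _) xcot_continuousOn
    intro x hx
    rw [interior_Icc] at hx
    obtain ⟨h1, h2⟩ := hx
    have h2' : x < π := by linarith [pi_pos]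
    rw [(xcot_hasDeriv h1 h2').deriv]
    have hs : 0 < Real.sin x := Real.sin_pos_of_pos_of_lt_pi h1 h2'
    have hc1 : Real.cos x ≤ 1 := Real.cos_le_one x
    have hsx : Real.sin x < x := Real.sin_lt h1
    apply div_neg_of_neg_of_pos _ (by positivity)
    nlinarith
  exact this.antitoneOn

lemma logxcot_hasDeriv {x : ℝ} (h1 : 0 < x) (h2 : x < π / 2) :
    HasDerivAt (fun y => Real.log (xCot y)) (phiAux x) x := by
  have hpos : 0 < xCot x := xcot_pos h1.le h2
  have h := (xcot_hasDeriv h1 (by linarith [pi_pos])).log hpos.ne'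
  have hs : 0 < Real.sin x := Real.sin_pos_of_pos_of_lt_pi h1 (by linarith [pi_pos])
  have hc : 0 < Real.cos x := Real.cos_pos_of_mem_Ioo ⟨by linarith, h2⟩
  have heq : (Real.sin x * Real.cos x - x) / Real.sin x ^ 2 / xCot x = phiAux x := by
    rw [xCot, if_neg h1.ne', phiAux]
    field_simp
  rwa [heq] at h

lemma xcot_superadd {a b : ℝ} (ha : 0 < a) (hb : 0 < b) (hab : a + b < π / 2) :
    xCot (a + b) < xCot a * xCot b := by
  set H : ℝ → ℝ := fun t => Real.log (xCot t) - Real.log (xCot (t + b)) with hH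
  have hmono : StrictMonoOn H (Icc 0 a) := by
    apply strictMonoOn_of_deriv_pos (convex_Icc _ _)
    · apply ContinuousOn.sub
      · apply ContinuousOn.log
        · apply xcot_continuousOn.mono
          intro t ht
          exact ⟨ht.1, by linarith [ht.2]⟩
        · intro t ht
          exact (xcot_pos ht.1 (by linarith [ht.2])).ne'
      · apply ContinuousOn.log
        · apply ContinuousOn.comp xcot_continuousOn
            (Continuous.continuousOn (by fun_prop))
          intro t ht
          exact ⟨by change (0:ℝ) ≤ t + b; linarith [ht.1],
            by change t + b ≤ π / 2; linarith [ht.2]⟩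
        · intro t ht
          exact (xcot_pos (by linarith [ht.1]) (by linarith [ht.2])).ne'
    · intro x hx
      rw [interior_Icc] at hx
      obtain ⟨h1, h2⟩ := hx
      have hd1 : HasDerivAt (fun y => Real.log (xCot y)) (phiAux x) x :=
        logxcot_hasDeriv h1 (by linarith)
      have hd2 : HasDerivAt (fun t => Real.log (xCot (t + b))) (phiAux (x + b) * 1) x := by
        exact (logxcot_hasDeriv (by linarith) (by linarith)).comp x
          ((hasDerivAt_id x).add_const b)
      have hd : HasDerivAt H (phiAux x - phiAux (x + b) * 1) x := hd1.sub hd2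
      rw [hd.deriv, mul_one, sub_pos]
      exact phiAux_anti ⟨h1, by linarith⟩ ⟨by linarith, by linarith⟩ (by linarith)
  have h01 : (0 : ℝ) ∈ Icc 0 a := ⟨le_rfl, ha.le⟩
  have ha1 : a ∈ Icc 0 a := ⟨ha.le, le_rfl⟩
  have hlt := hmono h01 ha1 ha
  have hH0 : H 0 = -Real.log (xCot b) := by
    simp [hH, xCot]
  have hHa : H a = Real.log (xCot a) - Real.log (xCot (a + b)) := rfl
  rw [hH0, hHa] at hlt
  have hpa : 0 < xCot a := xcot_pos ha.le (by linarith)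
  have hpb : 0 < xCot b := xcot_pos hb.le (by linarith)
  have hpab : 0 < xCot (a + b) := xcot_pos (by linarith) hab
  have : Real.log (xCot (a + b)) < Real.log (xCot a * xCot b) := by
    rw [Real.log_mul hpa.ne' hpb.ne']
    linarith
  exact (Real.log_lt_log_iff hpab (by positivity)).mp this



/-- Inequality `(4_s)` of Nazarov–Petrov: for `X ∈ [0, π/2)`, `Y, Z ∈ (0, π/2)` with
`X + Y + Z ≤ π/2`, one has `f(Y)·f(Z) > f(X)·f(X + Y + Z)` where `f(x) = x·cot x`,
`f(0) = 1`. -/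
theorem xcot_product_inequality (X Y Z : ℝ)
    (hX : X ∈ Set.Ico 0 (π / 2)) (hY : Y ∈ Set.Ioo 0 (π / 2)) (hZ : Z ∈ Set.Ioo 0 (π / 2))
    (hsum : X + Y + Z ≤ π / 2) :
    xCot Y * xCot Z > xCot X * xCot (X + Y + Z) := by
  obtain ⟨hX0, hX2⟩ := hX
  obtain ⟨hY0, hY2⟩ := hY
  obtain ⟨hZ0, hZ2⟩ := hZ
  have hYZ : Y + Z ≤ π / 2 := by linarith
  rcases lt_or_eq_of_le hYZ with h | h
  · have key : xCot (Y + Z) < xCot Y * xCot Z := xcot_superadd hY0 hZ0 h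
    have hmono : xCot (X + Y + Z) ≤ xCot (Y + Z) := by
      apply xcot_antitoneOn ⟨by linarith, by linarith⟩ ⟨by linarith, hsum⟩ (by linarith)
    have hXle : xCot X ≤ 1 := by
      have := xcot_antitoneOn ⟨le_rfl, by linarith [pi_pos]⟩ ⟨hX0, by linarith⟩ hX0
      simpa [xCot] using this
    have hS : 0 ≤ xCot (X + Y + Z) := xcot_nonneg (by linarith) hsum
    nlinarith [key, hmono, hXle, hS]
  · -- Y + Z = π / 2, so X = 0 and X + Y + Z = π / 2
    have hXeq : X = 0 := by linarith
    have hSeq : X + Y + Z = π / 2 := by linarith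
    rw [hXeq]
    rw [show (0:ℝ) + Y + Z = π / 2 by linarith]
    have h0 : xCot 0 = 1 := by simp [xCot]
    have hpi : xCot (π / 2) = 0 := by
      rw [xCot, if_neg (by positivity : (π / 2 : ℝ) ≠ 0), Real.cos_pi_div_two]
      simp
    rw [h0, hpi]
    simpa using mul_pos (xcot_pos hY0.le hY2) (xcot_pos hZ0.le hZ2)
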